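/- There exists a universal constant C > 0 such that for every integer t > 2 and every ε ∈ (0,1/2), if X_t = ∑_{i=1}^t g_i² where g_1,…,g_t are i.i.d. standard Gaussian N(0,1) random variables (so that X_t is chi-squared distributed with t degrees of freedom), then Pr( X_t < t/(1+ε) ) ≥ e^{−C·ε²·t} / t. -/

import Mathlib

open MeasureTheory ProbabilityTheory Metric
open scoped ENNReal NNReal Classical

noncomputable def gaussianJL (t d : ℕ) : Measure (Fin t → Fin d → ℝ) :=
  Measure.pi fun _ : Fin t => Measure.pi fun _ : Fin d => gaussianReal 0 (t : ℝ≥0)⁻¹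

noncomputable def appJL {t d : ℕ} (G : Fin t → Fin d → ℝ)
    (x : EuclideanSpace ℝ (Fin d)) : EuclideanSpace ℝ (Fin t) :=
  WithLp.toLp 2 fun i => ∑ j, G i j * x j

noncomputable def nearestDist {d : ℕ} (p : EuclideanSpace ℝ (Fin d))
    (C : Finset (EuclideanSpace ℝ (Fin d))) : ℝ :=
  sInf ((fun c => ‖p - c‖) '' ↑C)

noncomputable def costZ {d : ℕ} (P C : Finset (EuclideanSpace ℝ (Fin d))) (z : ℝ) : ℝ :=
  ∑ p ∈ P, nearestDist p C ^ z

noncomputable def optZ {d : ℕ} (P Q : Finset (EuclideanSpace ℝ (Fin d))) (k : ℕ) (z : ℝ) : ℝ :=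
  sInf {v | ∃ C : Finset (EuclideanSpace ℝ (Fin d)),
    C ⊆ Q ∧ C.Nonempty ∧ C.card ≤ k ∧ v = costZ P C z}

def HasDoublingDim {d : ℕ} (S : Set (EuclideanSpace ℝ (Fin d))) (m : ℝ) : Prop :=
  ∀ x ∈ S, ∀ r > 0, ∃ F : Finset (EuclideanSpace ℝ (Fin d)),
    (F.card : ℝ) ≤ (2 : ℝ) ^ m ∧
      S ∩ closedBall x r ⊆ ⋃ y ∈ F, closedBall y (r / 2)


section ChiSquaredAux

open Real ENNReal

set_option maxHeartbeats 1000000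

private theorem chiAux_lintegral_fin_prod {n : ℕ} (f : Fin n → ℝ → ℝ≥0∞)
    (hf : ∀ i, Measurable (f i)) :
    ∫⁻ x : Fin n → ℝ, ∏ i, f i (x i) ∂(Measure.pi fun _ => volume) = ∏ i, ∫⁻ y, f i y := by
  induction n with
  | zero => simp
  | succ n ih =>
    have hmp := ((measurePreserving_piFinSuccAbove (fun _ : Fin (n+1) => (volume : Measure ℝ)) 0).symm)
    rw [← hmp.lintegral_comp_emb (MeasurableEquiv.measurableEmbedding _)]
    simp_rw [MeasurableEquiv.piFinSuccAbove_symm_apply, Fin.insertNthEquiv,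
      Fin.prod_univ_succ, Fin.insertNth_zero]
    simp only [Fin.zero_succAbove, Function.comp_def, Equiv.coe_fn_mk, Fin.cons_zero,
      Fin.cons_succ, cast_eq]
    have h2 : AEMeasurable (fun y : Fin n → ℝ => ∏ x : Fin n, f x.succ (y x))
        (Measure.pi fun _ => volume) :=
      (Finset.measurable_prod Finset.univ
        (fun i _ => (hf i.succ).comp (measurable_pi_apply i))).aemeasurable
    have key := MeasureTheory.lintegral_prod_mul (μ := (volume : Measure ℝ))
      (ν := Measure.pi fun _ : Fin n => (volume : Measure ℝ)) (f := f 0)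
      (g := fun y : Fin n → ℝ => ∏ x : Fin n, f x.succ (y x)) (hf 0).aemeasurable h2
    rw [key, ih (fun i => f i.succ) (fun i => hf i.succ)]

private theorem chiAux_pi_gaussian_eq (t : ℕ) :
    (Measure.pi fun _ : Fin t => gaussianReal 0 1) =
      (volume : Measure (Fin t → ℝ)).withDensity fun g => ∏ i, gaussianPDF 0 1 (g i) := by
  refine Measure.pi_eq fun s hs => ?_
  rw [withDensity_apply _ (MeasurableSet.univ_pi hs)]
  have hmeas : ∀ i : Fin t, Measurable fun y : ℝ => (s i).indicator (gaussianPDF 0 1) y :=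
    fun i => (measurable_gaussianPDF 0 1).indicator (hs i)
  have hind : ∀ x : Fin t → ℝ, (Set.pi Set.univ s).indicator
      (fun g : Fin t → ℝ => ∏ i, gaussianPDF 0 1 (g i)) x
      = ∏ i, (s i).indicator (gaussianPDF 0 1) (x i) := by
    intro x
    by_cases hx : x ∈ Set.pi Set.univ s
    · rw [Set.indicator_of_mem hx]
      exact Finset.prod_congr rfl fun i _ =>
        (Set.indicator_of_mem (hx i (Set.mem_univ i)) _).symm
    · rw [Set.indicator_of_notMem hx]
      obtain ⟨i, hi⟩ : ∃ i, x i ∉ s i := by simpa [Set.mem_pi] using hx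
      exact (Finset.prod_eq_zero (Finset.mem_univ i)
        (by rw [Set.indicator_of_notMem hi])).symm
  calc ∫⁻ x in Set.pi Set.univ s, (∏ i, gaussianPDF 0 1 (x i)) ∂volume
      = ∫⁻ x : Fin t → ℝ, ∏ i, (s i).indicator (gaussianPDF 0 1) (x i) ∂volume := by
        rw [← lintegral_indicator (MeasurableSet.univ_pi hs)]
        exact lintegral_congr hind
    _ = ∏ i, ∫⁻ y, (s i).indicator (gaussianPDF 0 1) y := by
        rw [MeasureTheory.volume_pi]; exact chiAux_lintegral_fin_prod _ hmeas
    _ = ∏ i : Fin t, gaussianReal 0 1 (s i) := by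
        refine Finset.prod_congr rfl fun i _ => ?_
        rw [lintegral_indicator (hs i), gaussianReal_apply 0 one_ne_zero (s i)]

private theorem chiAux_volume_Bset (t : ℕ) (ht : 0 < t) (s : ℝ) (hs : 0 ≤ s) :
    (volume : Measure (Fin t → ℝ)) {g | ∑ i, (g i) ^ 2 < s} =
      ENNReal.ofReal (Real.sqrt s ^ t * (Real.sqrt π ^ t / Real.Gamma (t / 2 + 1))) := by
  have : Nonempty (Fin t) := ⟨⟨0, ht⟩⟩
  have hA : MeasurableSet {g : Fin t → ℝ | ∑ i, (g i) ^ 2 < s} :=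
    measurableSet_lt (by fun_prop) measurable_const
  have hpre : (MeasurableEquiv.toLp 2 (Fin t → ℝ)).symm ⁻¹'
      {g : Fin t → ℝ | ∑ i, (g i) ^ 2 < s} = Metric.ball (0 : EuclideanSpace ℝ (Fin t)) (√s) := by
    ext y
    simp only [Set.mem_preimage, Set.mem_setOf_eq, Metric.mem_ball, dist_zero_right,
      EuclideanSpace.norm_eq]
    constructor
    · intro h
      have h1 : ∑ i, y i ^ 2 < s := h
      calc √(∑ i, ‖y i‖ ^ 2) = √(∑ i, y i ^ 2) := by simp [sq_abs]
        _ < √s := Real.sqrt_lt_sqrt (by positivity) h1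
    · intro h
      have := Real.lt_sq_of_sqrt_lt (by simpa [sq_abs] using h)
      calc ∑ i, y i ^ 2 < √s ^ 2 := this
        _ ≤ s := by rw [Real.sq_sqrt hs]
  rw [← (EuclideanSpace.volume_preserving_symm_measurableEquiv_toLp (Fin t)).measure_preimage
      hA.nullMeasurableSet, hpre, EuclideanSpace.volume_ball]
  rw [← ENNReal.ofReal_pow (Real.sqrt_nonneg s), ← ENNReal.ofReal_mul (by positivity)]
  simp [Fintype.card_fin]

private theorem chiAux_Bset_meas (t : ℕ) (s : ℝ) :
    MeasurableSet {g : Fin t → ℝ | ∑ i, (g i) ^ 2 < s} :=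
  measurableSet_lt (by fun_prop) measurable_const

private theorem chiAux_prod_pdf_eq (t : ℕ) (x : Fin t → ℝ) :
    ∏ i, gaussianPDF 0 1 (x i) =
      ENNReal.ofReal ((Real.sqrt (2 * π))⁻¹ ^ t * Real.exp (-(∑ i, (x i) ^ 2) / 2)) := by
  have hpdf : ∀ y : ℝ, gaussianPDFReal 0 1 y = (Real.sqrt (2 * π))⁻¹ * Real.exp (-(y ^ 2) / 2) := by
    intro y
    simp [gaussianPDFReal, NNReal.coe_one]
  simp_rw [gaussianPDF, hpdf]
  rw [← ENNReal.ofReal_prod_of_nonneg (fun i _ => by positivity), Finset.prod_mul_distrib,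
    Finset.prod_const, ← Real.exp_sum]
  have h2 : ∑ i, -(x i) ^ 2 / 2 = -(∑ i, (x i) ^ 2) / 2 := by
    rw [← Finset.sum_div, ← Finset.sum_neg_distrib]
  rw [h2, Finset.card_univ, Fintype.card_fin]

private theorem chiAux_mu_shell_lb (t : ℕ) (ht : 0 < t) (s1 s2 : ℝ) (h1 : 0 ≤ s1)
    (h12 : s1 ≤ s2) :
    ENNReal.ofReal ((Real.sqrt (2 * π))⁻¹ ^ t * Real.exp (-(s2 / 2)) *
        ((Real.sqrt s2 ^ t - Real.sqrt s1 ^ t) * (Real.sqrt π ^ t / Real.Gamma (t / 2 + 1)))) ≤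
      (Measure.pi fun _ : Fin t => gaussianReal 0 1)
        ({g | ∑ i, (g i) ^ 2 < s2} \ {g | ∑ i, (g i) ^ 2 < s1}) := by
  have hS : MeasurableSet ({g : Fin t → ℝ | ∑ i, (g i) ^ 2 < s2} \ {g | ∑ i, (g i) ^ 2 < s1}) :=
    (chiAux_Bset_meas t s2).diff (chiAux_Bset_meas t s1)
  rw [chiAux_pi_gaussian_eq, withDensity_apply _ hS]
  set c : ℝ := (Real.sqrt (2 * π))⁻¹ ^ t * Real.exp (-(s2 / 2)) with hc
  have hc0 : 0 ≤ c := by positivity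
  have hlb : ∀ x ∈ ({g : Fin t → ℝ | ∑ i, (g i) ^ 2 < s2} \ {g | ∑ i, (g i) ^ 2 < s1}),
      ENNReal.ofReal c ≤ ∏ i, gaussianPDF 0 1 (x i) := by
    intro x hx
    rw [chiAux_prod_pdf_eq]
    refine ENNReal.ofReal_le_ofReal ?_
    have hx2 : ∑ i, (x i) ^ 2 < s2 := hx.1
    have : Real.exp (-(s2 / 2)) ≤ Real.exp (-(∑ i, (x i) ^ 2) / 2) := by
      apply Real.exp_le_exp.mpr; linarith
    rw [hc]
    exact mul_le_mul_of_nonneg_left this (by positivity)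
  calc ENNReal.ofReal (c * ((Real.sqrt s2 ^ t - Real.sqrt s1 ^ t) *
          (Real.sqrt π ^ t / Real.Gamma (t / 2 + 1))))
      = ENNReal.ofReal c * ENNReal.ofReal ((Real.sqrt s2 ^ t - Real.sqrt s1 ^ t) *
          (Real.sqrt π ^ t / Real.Gamma (t / 2 + 1))) := ENNReal.ofReal_mul hc0
    _ = ENNReal.ofReal c * volume ({g : Fin t → ℝ | ∑ i, (g i) ^ 2 < s2} \
          {g | ∑ i, (g i) ^ 2 < s1}) := by
        congr 1
        have hsub : {g : Fin t → ℝ | ∑ i, (g i) ^ 2 < s1} ⊆ {g | ∑ i, (g i) ^ 2 < s2} :=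
          fun g hg => lt_of_lt_of_le hg h12
        have hd := measure_diff (μ := (volume : Measure (Fin t → ℝ))) hsub
          (chiAux_Bset_meas t s1).nullMeasurableSet
          (by rw [chiAux_volume_Bset t ht s1 h1]; exact ENNReal.ofReal_ne_top)
        rw [hd, chiAux_volume_Bset t ht s1 h1, chiAux_volume_Bset t ht s2 (le_trans h1 h12),
          ← ENNReal.ofReal_sub _ (by positivity)]
        congr 1
        ring
    _ ≤ ∫⁻ x in ({g : Fin t → ℝ | ∑ i, (g i) ^ 2 < s2} \ {g | ∑ i, (g i) ^ 2 < s1}),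
          ∏ i, gaussianPDF 0 1 (x i) ∂volume := by
        rw [← setLIntegral_const]
        exact setLIntegral_mono (Finset.measurable_prod _
          (fun i _ => (measurable_gaussianPDF 0 1).comp (measurable_pi_apply i))) hlb

private theorem chiAux_gamma_step (x : ℝ) (hx : 1 ≤ x)
    (h : Real.Gamma (x + 1) ≤ 2 * x * x ^ x * Real.exp (-x)) :
    Real.Gamma (x + 1 + 1) ≤ 2 * (x + 1) * (x + 1) ^ (x + 1) * Real.exp (-(x + 1)) := by
  have hx0 : (0:ℝ) < x := lt_of_lt_of_le one_pos hx
  have hx1 : (0:ℝ) < x + 1 := by linarith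
  rw [Real.Gamma_add_one (by positivity)]
  have step : (x + 1) * (2 * x * x ^ x * Real.exp (-x)) ≤
      2 * (x + 1) * (x + 1) ^ (x + 1) * Real.exp (-(x + 1)) := by
    have hkey : x ^ (x + 1) * Real.exp 1 ≤ (x + 1) ^ (x + 1) := by
      have hlog : 1 / (x + 1) ≤ Real.log ((x + 1) / x) := by
        have h0 := Real.log_le_sub_one_of_pos (x := x / (x + 1)) (by positivity)
        have h1 : Real.log (x / (x + 1)) = -Real.log ((x + 1) / x) := by
          rw [← Real.log_inv]
          congr 1
          field_simp
        rw [h1] at h0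
        have h2 : x / (x + 1) - 1 = -(1 / (x + 1)) := by field_simp; ring
        rw [h2] at h0
        linarith
      have hq : Real.exp 1 ≤ ((x + 1) / x) ^ (x + 1) := by
        rw [← Real.exp_log (x := ((x + 1) / x) ^ (x + 1)) (by positivity),
          Real.log_rpow (by positivity)]
        apply Real.exp_le_exp.mpr
        calc (1:ℝ) = (x + 1) * (1 / (x + 1)) := by field_simp
          _ ≤ (x + 1) * Real.log ((x + 1) / x) :=
              mul_le_mul_of_nonneg_left hlog (le_of_lt hx1)
      calc x ^ (x + 1) * Real.exp 1 ≤ x ^ (x + 1) * ((x + 1) / x) ^ (x + 1) :=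
            mul_le_mul_of_nonneg_left hq (by positivity)
        _ = (x + 1) ^ (x + 1) := by
            rw [Real.div_rpow (by positivity) (le_of_lt hx0)]
            field_simp
    have hxx : x * x ^ x = x ^ (x + 1) := by
      rw [Real.rpow_add hx0, Real.rpow_one]; ring
    have hexp : Real.exp (-x) = Real.exp (-(x + 1)) * Real.exp 1 := by
      rw [← Real.exp_add]; ring_nf
    calc (x + 1) * (2 * x * x ^ x * Real.exp (-x))
        = 2 * (x + 1) * (x ^ (x + 1) * Real.exp 1) * Real.exp (-(x + 1)) := by
          rw [hexp, ← hxx]; ring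
      _ ≤ 2 * (x + 1) * (x + 1) ^ (x + 1) * Real.exp (-(x + 1)) := by
          exact mul_le_mul_of_nonneg_right
            (mul_le_mul_of_nonneg_left hkey (by positivity)) (le_of_lt (Real.exp_pos _))
  calc (x + 1) * Real.Gamma (x + 1) ≤ (x + 1) * (2 * x * x ^ x * Real.exp (-x)) :=
        mul_le_mul_of_nonneg_left h (le_of_lt hx1)
    _ ≤ _ := step

private theorem chiAux_exp_two_le : Real.exp 2 ≤ 8 := by
  rw [show (2:ℝ) = 1 + 1 by norm_num, Real.exp_add]
  nlinarith [Real.exp_one_lt_d9, Real.exp_pos 1]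

private theorem chiAux_exp_five_le : Real.exp 5 ≤ 148.42 := by
  rw [show (5:ℝ) = 1 + 1 + 1 + 1 + 1 by norm_num, Real.exp_add, Real.exp_add, Real.exp_add,
    Real.exp_add]
  have h1 := Real.exp_one_lt_d9
  have hp := Real.exp_pos 1
  have h2 : Real.exp 1 * Real.exp 1 ≤ 7.38906 := by nlinarith
  have h4 : Real.exp 1 * Real.exp 1 * (Real.exp 1 * Real.exp 1) ≤ 54.5983 := by nlinarith
  nlinarith

private theorem chiAux_gamma_base4 :
    Real.Gamma ((2:ℝ) + 1) ≤ 2 * 2 * (2:ℝ) ^ (2:ℝ) * Real.exp (-2) := by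
  have hg : Real.Gamma ((2:ℝ) + 1) = 2 := by
    rw [Real.Gamma_add_one (by norm_num), Real.Gamma_two]; norm_num
  have hr : (2:ℝ) ^ (2:ℝ) = 4 := by
    rw [show (2:ℝ) = ((2:ℕ):ℝ) by norm_num, Real.rpow_natCast]; norm_num
  rw [hg, hr, Real.exp_neg]
  nlinarith [chiAux_exp_two_le, Real.exp_pos 2, mul_inv_cancel₀ (ne_of_gt (Real.exp_pos 2)),
    inv_pos.mpr (Real.exp_pos 2)]

private theorem chiAux_gamma_base5 : Real.Gamma ((5:ℝ)/2 + 1) ≤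
    2 * ((5:ℝ)/2) * ((5:ℝ)/2) ^ ((5:ℝ)/2) * Real.exp (-((5:ℝ)/2)) := by
  have hg : Real.Gamma ((5:ℝ)/2 + 1) = (15/8) * Real.sqrt π := by
    rw [Real.Gamma_add_one (by norm_num),
      show (5:ℝ)/2 = 3/2 + 1 by norm_num, Real.Gamma_add_one (by norm_num),
      show (3:ℝ)/2 = 1/2 + 1 by norm_num, Real.Gamma_add_one (by norm_num),
      Real.Gamma_one_half_eq]
    ring
  have hr : ((5:ℝ)/2) ^ ((5:ℝ)/2) = (25/4) * Real.sqrt (5/2) := by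
    rw [show ((5:ℝ)/2) = (2:ℝ) + 1/2 by norm_num, Real.rpow_add (by norm_num),
      show ((2:ℝ) + 1/2) = (5:ℝ)/2 by norm_num]
    rw [show ((5:ℝ)/2) ^ (2:ℝ) = 25/4 by
      rw [show (2:ℝ) = ((2:ℕ):ℝ) by norm_num, Real.rpow_natCast]; norm_num]
    rw [← Real.sqrt_eq_rpow]
  rw [hg, hr, Real.exp_neg]
  have hE2 : Real.exp ((5:ℝ)/2) ^ 2 = Real.exp 5 := by
    rw [← Real.exp_nat_mul]; norm_num
  have hE : Real.exp ((5:ℝ)/2) ≤ 12.19 := by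
    nlinarith [chiAux_exp_five_le, Real.exp_pos ((5:ℝ)/2)]
  have hpi : Real.sqrt π ≤ 1.78 := by
    nlinarith [Real.sq_sqrt (le_of_lt Real.pi_pos), Real.sqrt_nonneg π, Real.pi_lt_d2]
  have hb : (1.58:ℝ) ≤ Real.sqrt (5/2) := by
    nlinarith [Real.sq_sqrt (show (0:ℝ) ≤ 5/2 by norm_num), Real.sqrt_nonneg (5/2:ℝ)]
  nlinarith [hE, hpi, hb, Real.exp_pos ((5:ℝ)/2),
    mul_inv_cancel₀ (ne_of_gt (Real.exp_pos ((5:ℝ)/2))),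
    inv_pos.mpr (Real.exp_pos ((5:ℝ)/2)), Real.sqrt_nonneg π]

private theorem chiAux_gamma_ub (n : ℕ) (hn : 4 ≤ n) :
    Real.Gamma ((n:ℝ)/2 + 1) ≤
      2 * ((n:ℝ)/2) * ((n:ℝ)/2) ^ ((n:ℝ)/2) * Real.exp (-((n:ℝ)/2)) := by
  set P : ℕ → Prop := fun m => Real.Gamma (((m:ℝ)+4)/2 + 1) ≤
    2 * (((m:ℝ)+4)/2) * (((m:ℝ)+4)/2) ^ (((m:ℝ)+4)/2) * Real.exp (-(((m:ℝ)+4)/2)) with hP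
  have key : ∀ m : ℕ, P m ∧ P (m+1) := by
    intro m
    induction m with
    | zero =>
      constructor
      · rw [hP]; convert chiAux_gamma_base4 using 4 <;> norm_num
      · rw [hP]; convert chiAux_gamma_base5 using 4 <;> norm_num
    | succ m ih =>
      refine ⟨ih.2, ?_⟩
      have hstep := chiAux_gamma_step (((m:ℝ)+4)/2)
        (by have h0 : (0:ℝ) ≤ (m:ℝ) := Nat.cast_nonneg m; linarith) ih.1
      rw [hP]
      push_cast
      rw [show ((m:ℝ) + 1 + 1 + 4)/2 = ((m:ℝ)+4)/2 + 1 by ring]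
      convert hstep using 3
  obtain ⟨m, rfl⟩ : ∃ m, n = m + 4 := ⟨n - 4, by omega⟩
  have := (key m).1
  rw [hP] at this
  push_cast at this ⊢
  convert this using 3
  all_goals ring

private theorem chiAux_real_main (t : ℕ) (ht : 4 ≤ t) (ε : ℝ) (hε : 0 < ε) (hε2 : ε < 1/2) :
    Real.exp (-(ε^2 * t)) / t ≤
      Real.exp (-(((t:ℝ)/(1+ε))/2)) * (((t:ℝ)/(1+ε))/2) ^ ((t:ℝ)/2) /
        Real.Gamma ((t:ℝ)/2 + 1) := by
  set T : ℝ := (t:ℝ) with hT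
  have hT4 : (4:ℝ) ≤ T := by rw [hT]; exact_mod_cast ht
  have hT0 : (0:ℝ) < T := by linarith
  have he1 : (0:ℝ) < 1 + ε := by linarith
  set s : ℝ := T / (1+ε) with hs
  have hs0 : (0:ℝ) < s := by positivity
  set p : ℝ := T / 2 with hp
  have hp0 : (0:ℝ) < p := by rw [hp]; positivity
  have hGpos : 0 < Real.Gamma (T/2 + 1) := Real.Gamma_pos_of_pos (by positivity)
  have hG : Real.Gamma (T/2 + 1) ≤ T * (T/2) ^ (T/2) * Real.exp (-(T/2)) := by
    calc Real.Gamma (T/2+1) ≤ 2 * (T/2) * (T/2) ^ (T/2) * Real.exp (-(T/2)) :=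
          chiAux_gamma_ub t ht
      _ = T * (T/2) ^ (T/2) * Real.exp (-(T/2)) := by ring_nf
  have hB0 : (0:ℝ) < T * (T/2) ^ (T/2) * Real.exp (-(T/2)) := by positivity
  have hnum0 : (0:ℝ) ≤ Real.exp (-(s/2)) * (s/2) ^ p := by positivity
  have step1 : Real.exp (-(s/2)) * (s/2) ^ p / (T * (T/2) ^ (T/2) * Real.exp (-(T/2))) ≤
      Real.exp (-(s/2)) * (s/2) ^ p / Real.Gamma (T/2 + 1) := by
    gcongr
  refine le_trans ?_ step1
  have hrs : ((s/2 : ℝ)) ^ p = Real.exp (p * (Real.log (T/2) - Real.log (1+ε))) := by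
    rw [Real.rpow_def_of_pos (by positivity),
      show s/2 = (T/2)/(1+ε) by rw [hs]; ring,
      Real.log_div (by positivity) (by positivity)]
    ring_nf
  have hrT : ((T/2 : ℝ)) ^ (T/2) = Real.exp ((T/2) * Real.log (T/2)) := by
    rw [Real.rpow_def_of_pos (by positivity)]
    ring_nf
  have hlog : Real.log (1+ε) ≤ ε := by
    have := Real.log_le_sub_one_of_pos he1; linarith
  have hexpineq : Real.exp (-(ε^2*T)) ≤ Real.exp (p - s/2 - p * Real.log (1+ε)) := by
    apply Real.exp_le_exp.mpr
    have h1 : p - s/2 = p * (ε/(1+ε)) := by rw [hp, hs]; field_simp; ring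
    have h2 : p * Real.log (1+ε) ≤ p * ε := mul_le_mul_of_nonneg_left hlog (le_of_lt hp0)
    have h3 : p * (ε/(1+ε)) - p * ε = -(p * (ε^2/(1+ε))) := by field_simp; ring
    have h45 : ε^2/(1+ε) ≤ ε^2 := by
      rw [div_le_iff₀ he1]; nlinarith
    have h4 : p * (ε^2/(1+ε)) ≤ ε^2 * T := by
      calc p * (ε^2/(1+ε)) ≤ p * ε^2 := mul_le_mul_of_nonneg_left h45 (le_of_lt hp0)
        _ ≤ ε^2 * T := by rw [hp]; nlinarith
    linarith
  calc Real.exp (-(ε^2*T)) / T ≤ Real.exp (p - s/2 - p * Real.log (1+ε)) / T :=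
        (div_le_div_iff_of_pos_right hT0).mpr hexpineq
    _ = Real.exp (-(s/2)) * (s/2) ^ p / (T * (T/2) ^ (T/2) * Real.exp (-(T/2))) := by
        rw [hrs, hrT, div_eq_div_iff (ne_of_gt hT0) (by positivity)]
        calc Real.exp (p - s/2 - p * Real.log (1+ε)) *
              (T * Real.exp ((T/2) * Real.log (T/2)) * Real.exp (-(T/2)))
            = T * Real.exp ((p - s/2 - p * Real.log (1+ε)) +
                ((T/2) * Real.log (T/2) + -(T/2))) := by
              rw [Real.exp_add, Real.exp_add]; ring
          _ = T * Real.exp (-(s/2) + p * (Real.log (T/2) - Real.log (1+ε))) := by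
              rw [hp]; ring_nf
          _ = Real.exp (-(s/2)) * Real.exp (p * (Real.log (T/2) - Real.log (1+ε))) * T := by
              rw [Real.exp_add]; ring

private theorem chiAux_inv_lb {X c : ℝ} (hX : 0 < X) (h : c * X ≤ 1) : c ≤ X⁻¹ := by
  rw [← one_div, le_div_iff₀ hX]; exact h

private theorem chiAux_numeric3 :
    (1:ℝ)/3 ≤
      (Real.sqrt (2*π))⁻¹ ^ 3 * Real.exp (-((1:ℝ)/2)) *
        ((Real.sqrt 1 ^ 3 - Real.sqrt 0 ^ 3) *
          (Real.sqrt π ^ 3 / Real.Gamma (((3:ℕ):ℝ)/2 + 1))) +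
      ((Real.sqrt (2*π))⁻¹ ^ 3 * Real.exp (-((3:ℝ)/2/2)) *
        ((Real.sqrt ((3:ℝ)/2) ^ 3 - Real.sqrt 1 ^ 3) *
          (Real.sqrt π ^ 3 / Real.Gamma (((3:ℕ):ℝ)/2 + 1))) +
      (Real.sqrt (2*π))⁻¹ ^ 3 * Real.exp (-((2:ℝ)/2)) *
        ((Real.sqrt 2 ^ 3 - Real.sqrt ((3:ℝ)/2) ^ 3) *
          (Real.sqrt π ^ 3 / Real.Gamma (((3:ℕ):ℝ)/2 + 1)))) := by
  have hπ0 : (0:ℝ) < π := Real.pi_pos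
  have hπu : π < 3.15 := by have := Real.pi_lt_d2; linarith
  set a : ℝ := Real.sqrt π with ha
  have ha2 : a^2 = π := Real.sq_sqrt hπ0.le
  have ha0 : 0 < a := Real.sqrt_pos.mpr hπ0
  have hGam : Real.Gamma (((3:ℕ):ℝ)/2 + 1) = 3/4 * a := by
    rw [show (((3:ℕ):ℝ)/2 + 1) = (3:ℝ)/2 + 1 by norm_num,
      Real.Gamma_add_one (by norm_num), show (3:ℝ)/2 = 1/2 + 1 by norm_num,
      Real.Gamma_add_one (by norm_num), Real.Gamma_one_half_eq, ← ha]
    ring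
  set q : ℝ := Real.sqrt (2*π) with hqd
  have hq2 : q^2 = 2*π := Real.sq_sqrt (by positivity)
  have hq0 : 0 < q := Real.sqrt_pos.mpr (by positivity)
  have hqu : q ≤ 2.51 := by nlinarith
  set r : ℝ := Real.sqrt ((3:ℝ)/2) with hrd
  have hr2 : r^2 = 3/2 := Real.sq_sqrt (by norm_num)
  have hr0 : 0 ≤ r := Real.sqrt_nonneg _
  have hrl : 1.224 ≤ r := by nlinarith
  have hru : r ≤ 1.2248 := by nlinarith
  set w : ℝ := Real.sqrt 2 with hwd
  have hw2 : w^2 = 2 := Real.sq_sqrt (by norm_num)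
  have hw0 : 0 ≤ w := Real.sqrt_nonneg _
  have hwl : 1.414 ≤ w := by nlinarith
  have hexp1 := Real.exp_one_lt_d9
  have hexp1p := Real.exp_pos 1
  have he1 : (0.6065:ℝ) ≤ Real.exp (-((1:ℝ)/2)) := by
    have hsq : Real.exp ((1:ℝ)/2) ^ 2 = Real.exp 1 := by
      rw [← Real.exp_nat_mul]; norm_num
    have hub : Real.exp ((1:ℝ)/2) ≤ 1.6488 := by nlinarith [Real.exp_pos ((1:ℝ)/2)]
    rw [Real.exp_neg]
    exact chiAux_inv_lb (Real.exp_pos _) (by nlinarith [Real.exp_pos ((1:ℝ)/2)])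
  have he2 : (0.4722:ℝ) ≤ Real.exp (-((3:ℝ)/2/2)) := by
    have hsq : Real.exp ((3:ℝ)/4) ^ 4 = Real.exp 3 := by
      rw [← Real.exp_nat_mul]; norm_num
    have hcube : Real.exp (3:ℝ) ≤ 20.0856 := by
      rw [show (3:ℝ) = 1 + 1 + 1 by norm_num, Real.exp_add, Real.exp_add]
      have h2 : Real.exp 1 * Real.exp 1 ≤ 7.38906 := by nlinarith
      have h3 := mul_le_mul_of_nonneg_right h2 hexp1p.le
      have h4 := mul_le_mul_of_nonneg_left hexp1.le (by norm_num : (0:ℝ) ≤ 7.38906)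
      linarith
    have hsq2 : Real.exp ((3:ℝ)/4) ^ 2 ≤ 4.4829 := by
      nlinarith [sq_nonneg (Real.exp ((3:ℝ)/4) ^ 2 - 4.4829), hsq, hcube,
        sq_nonneg (Real.exp ((3:ℝ)/4))]
    have hub : Real.exp ((3:ℝ)/4) ≤ 2.1175 := by
      nlinarith [sq_nonneg (Real.exp ((3:ℝ)/4) - 2.1175), Real.exp_pos ((3:ℝ)/4)]
    rw [show -((3:ℝ)/2/2) = -((3:ℝ)/4) by norm_num, Real.exp_neg]
    exact chiAux_inv_lb (Real.exp_pos _) (by nlinarith [Real.exp_pos ((3:ℝ)/4)])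
  have he3 : (0.3678:ℝ) ≤ Real.exp (-((2:ℝ)/2)) := by
    rw [show -((2:ℝ)/2) = -(1:ℝ) by norm_num, Real.exp_neg]
    exact chiAux_inv_lb (Real.exp_pos _) (by nlinarith)
  rw [hGam, Real.sqrt_one, Real.sqrt_zero, one_pow]
  have hfrac : a^3 / (3/4 * a) = 4/3 * π := by
    rw [pow_succ, ha2]; field_simp
  rw [hfrac]
  have hr3 : r^3 = 3/2 * r := by rw [pow_succ, hr2]
  have hw3 : w^3 = 2 * w := by rw [pow_succ, hw2]
  rw [hr3, hw3]
  have hq3 : (q⁻¹)^3 = 1/(2*π*q) := by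
    rw [inv_pow, pow_succ, hq2]; ring
  rw [hq3]
  have hzero : (0:ℝ)^3 = 0 := by norm_num
  rw [hzero]
  set E1 := Real.exp (-((1:ℝ)/2))
  set E2 := Real.exp (-((3:ℝ)/2/2))
  set E3 := Real.exp (-((2:ℝ)/2))
  have hE : 1/(2*π*q) * E1 * ((1 - 0) * (4/3*π)) +
      (1/(2*π*q) * E2 * ((3/2*r - 1) * (4/3*π)) +
       1/(2*π*q) * E3 * ((2*w - 3/2*r) * (4/3*π))) =
      2 * (E1 + E2*(3/2*r - 1) + E3*(2*w - 3/2*r)) / (3*q) := by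
    field_simp
    ring
  rw [hE, le_div_iff₀ (by positivity)]
  have p1 : (0:ℝ) ≤ (E2 - 0.4722) * (3/2*r - 1 - 0.836) :=
    mul_nonneg (by linarith) (by linarith)
  have p2 : (0:ℝ) ≤ (E3 - 0.3678) * (2*w - 3/2*r - 0.9908) :=
    mul_nonneg (by linarith) (by nlinarith)
  nlinarith [p1, p2, he1, he2, he3, hqu, hrl, hru, hwl]

end ChiSquaredAux

/-- Lower tail bound for the chi-squared distribution with t degrees of freedom:
Pr(X_t < t/(1+ε)) ≥ e^{−C ε² t}/t. -/
theorem chi_squared_lower_tail :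
    ∃ C : ℝ, 0 < C ∧
      ∀ t : ℕ, 2 < t →
      ∀ ε : ℝ, ε ∈ Set.Ioo (0 : ℝ) (1 / 2) →
        ENNReal.ofReal (Real.exp (-(C * ε ^ 2 * t)) / t) ≤
          (Measure.pi fun _ : Fin t => gaussianReal 0 1)
            {g | ∑ i, (g i) ^ 2 < (t : ℝ) / (1 + ε)} := by
  classical
  refine ⟨1, one_pos, ?_⟩
  intro t ht ε hεmem
  obtain ⟨hε0, hε2⟩ := hεmem
  have he1 : (0:ℝ) < 1 + ε := by linarith
  have ht0 : 0 < t := by omega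
  have hB0 : ∀ u : ℕ, {g : Fin u → ℝ | ∑ i, (g i) ^ 2 < (0:ℝ)} = ∅ := by
    intro u
    ext g
    simp only [Set.mem_setOf_eq, Set.mem_empty_iff_false, iff_false, not_lt]
    positivity
  by_cases h4 : 4 ≤ t
  · set s : ℝ := (t:ℝ)/(1+ε) with hsdef
    have hs0 : 0 < s := by positivity
    have hlb := chiAux_mu_shell_lb t ht0 0 s le_rfl hs0.le
    rw [hB0 t, Set.diff_empty] at hlb
    refine le_trans ?_ hlb
    apply ENNReal.ofReal_le_ofReal
    have hmain := chiAux_real_main t h4 ε hε0 hε2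
    have hsqrt0 : Real.sqrt (0:ℝ) ^ t = 0 := by
      rw [Real.sqrt_zero]
      exact zero_pow (by omega)
    have hb : (Real.sqrt (2*Real.pi))⁻¹ * (Real.sqrt s * Real.sqrt Real.pi)
        = Real.sqrt (s/2) := by
      rw [← Real.sqrt_mul hs0.le Real.pi, ← Real.sqrt_inv,
        ← Real.sqrt_mul (by positivity)]
      congr 1
      have hπ := Real.pi_pos
      field_simp
    have hbt : Real.sqrt (s/2) ^ t = (s/2) ^ ((t:ℝ)/2) := by
      rw [Real.sqrt_eq_rpow, ← Real.rpow_natCast ((s/2) ^ ((1:ℝ)/2)) t,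
        ← Real.rpow_mul (by positivity)]
      congr 1
      ring
    have heq : (Real.sqrt (2*Real.pi))⁻¹ ^ t * Real.exp (-(s/2)) *
          ((Real.sqrt s ^ t - Real.sqrt 0 ^ t) *
            (Real.sqrt Real.pi ^ t / Real.Gamma ((t:ℝ)/2 + 1)))
        = Real.exp (-(s/2)) * (s/2) ^ ((t:ℝ)/2) / Real.Gamma ((t:ℝ)/2 + 1) := by
      rw [hsqrt0, sub_zero, ← hbt, ← hb, mul_pow, mul_pow]
      ring
    rw [heq, show -(1*ε^2*(t:ℝ)) = -(ε^2*(t:ℝ)) by ring]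
    exact hmain
  · have h3 : t = 3 := by omega
    subst h3
    have hlb1 := chiAux_mu_shell_lb 3 (by norm_num) 0 1 le_rfl (by norm_num)
    have hlb2 := chiAux_mu_shell_lb 3 (by norm_num) 1 (3/2) (by norm_num) (by norm_num)
    have hlb3 := chiAux_mu_shell_lb 3 (by norm_num) (3/2) 2 (by norm_num) (by norm_num)
    rw [hB0 3, Set.diff_empty] at hlb1
    set μ := (Measure.pi fun _ : Fin 3 => gaussianReal 0 1) with hμ
    have hsub1 : {g : Fin 3 → ℝ | ∑ i, (g i) ^ 2 < (1:ℝ)} ⊆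
        {g | ∑ i, (g i) ^ 2 < (3/2:ℝ)} := by
      intro g hg
      simp only [Set.mem_setOf_eq] at *
      linarith
    have hsub2 : {g : Fin 3 → ℝ | ∑ i, (g i) ^ 2 < (3/2:ℝ)} ⊆
        {g | ∑ i, (g i) ^ 2 < (2:ℝ)} := by
      intro g hg
      simp only [Set.mem_setOf_eq] at *
      linarith
    have e1 : μ {g | ∑ i, (g i) ^ 2 < (3/2:ℝ)} = μ {g | ∑ i, (g i) ^ 2 < (1:ℝ)} +
        μ ({g | ∑ i, (g i) ^ 2 < (3/2:ℝ)} \ {g | ∑ i, (g i) ^ 2 < (1:ℝ)}) := by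
      rw [← measure_union Set.disjoint_sdiff_right
        ((chiAux_Bset_meas 3 (3/2)).diff (chiAux_Bset_meas 3 1)),
        Set.union_diff_cancel hsub1]
    have e2 : μ {g | ∑ i, (g i) ^ 2 < (2:ℝ)} = μ {g | ∑ i, (g i) ^ 2 < (3/2:ℝ)} +
        μ ({g | ∑ i, (g i) ^ 2 < (2:ℝ)} \ {g | ∑ i, (g i) ^ 2 < (3/2:ℝ)}) := by
      rw [← measure_union Set.disjoint_sdiff_right
        ((chiAux_Bset_meas 3 2).diff (chiAux_Bset_meas 3 (3/2))),
        Set.union_diff_cancel hsub2]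
    have hx1nn : (0:ℝ) ≤ (Real.sqrt (2*Real.pi))⁻¹ ^ 3 * Real.exp (-((1:ℝ)/2)) *
        ((Real.sqrt 1 ^ 3 - Real.sqrt 0 ^ 3) *
          (Real.sqrt Real.pi ^ 3 / Real.Gamma (((3:ℕ):ℝ)/2 + 1))) := by
      have h1 : Real.sqrt (0:ℝ) ^ 3 ≤ Real.sqrt 1 ^ 3 :=
        pow_le_pow_left₀ (Real.sqrt_nonneg _) (Real.sqrt_le_sqrt (by norm_num)) 3
      have hΓ : 0 < Real.Gamma (((3:ℕ):ℝ)/2 + 1) :=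
        Real.Gamma_pos_of_pos (by positivity)
      have := sub_nonneg.mpr h1
      positivity
    have hx2nn : (0:ℝ) ≤ (Real.sqrt (2*Real.pi))⁻¹ ^ 3 * Real.exp (-((3:ℝ)/2/2)) *
        ((Real.sqrt ((3:ℝ)/2) ^ 3 - Real.sqrt 1 ^ 3) *
          (Real.sqrt Real.pi ^ 3 / Real.Gamma (((3:ℕ):ℝ)/2 + 1))) := by
      have h1 : Real.sqrt (1:ℝ) ^ 3 ≤ Real.sqrt ((3:ℝ)/2) ^ 3 :=
        pow_le_pow_left₀ (Real.sqrt_nonneg _) (Real.sqrt_le_sqrt (by norm_num)) 3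
      have hΓ : 0 < Real.Gamma (((3:ℕ):ℝ)/2 + 1) :=
        Real.Gamma_pos_of_pos (by positivity)
      have := sub_nonneg.mpr h1
      positivity
    have hx3nn : (0:ℝ) ≤ (Real.sqrt (2*Real.pi))⁻¹ ^ 3 * Real.exp (-((2:ℝ)/2)) *
        ((Real.sqrt 2 ^ 3 - Real.sqrt ((3:ℝ)/2) ^ 3) *
          (Real.sqrt Real.pi ^ 3 / Real.Gamma (((3:ℕ):ℝ)/2 + 1))) := by
      have h1 : Real.sqrt ((3:ℝ)/2) ^ 3 ≤ Real.sqrt 2 ^ 3 :=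
        pow_le_pow_left₀ (Real.sqrt_nonneg _) (Real.sqrt_le_sqrt (by norm_num)) 3
      have hΓ : 0 < Real.Gamma (((3:ℕ):ℝ)/2 + 1) :=
        Real.Gamma_pos_of_pos (by positivity)
      have := sub_nonneg.mpr h1
      positivity
    have hgoalsub : {g : Fin 3 → ℝ | ∑ i, (g i) ^ 2 < (2:ℝ)} ⊆
        {g | ∑ i, (g i) ^ 2 < ((3:ℕ):ℝ)/(1+ε)} := by
      intro g hg
      have h2s : (2:ℝ) ≤ ((3:ℕ):ℝ)/(1+ε) := by
        rw [le_div_iff₀ he1]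
        push_cast
        linarith
      exact lt_of_lt_of_le hg h2s
    calc ENNReal.ofReal (Real.exp (-(1 * ε ^ 2 * ((3:ℕ):ℝ))) / ((3:ℕ):ℝ))
        ≤ ENNReal.ofReal ((1:ℝ)/3) := by
          apply ENNReal.ofReal_le_ofReal
          have hle1 : Real.exp (-(1 * ε ^ 2 * ((3:ℕ):ℝ))) ≤ 1 := by
            have h0 : -(1 * ε ^ 2 * ((3:ℕ):ℝ)) ≤ 0 := by push_cast; nlinarith
            simpa using Real.exp_le_exp.mpr h0
          push_cast at hle1 ⊢
          rw [div_le_div_iff₀ (by norm_num) (by norm_num)]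
          linarith
      _ ≤ ENNReal.ofReal ((Real.sqrt (2*Real.pi))⁻¹ ^ 3 * Real.exp (-((1:ℝ)/2)) *
            ((Real.sqrt 1 ^ 3 - Real.sqrt 0 ^ 3) *
              (Real.sqrt Real.pi ^ 3 / Real.Gamma (((3:ℕ):ℝ)/2 + 1))) +
          ((Real.sqrt (2*Real.pi))⁻¹ ^ 3 * Real.exp (-((3:ℝ)/2/2)) *
            ((Real.sqrt ((3:ℝ)/2) ^ 3 - Real.sqrt 1 ^ 3) *
              (Real.sqrt Real.pi ^ 3 / Real.Gamma (((3:ℕ):ℝ)/2 + 1))) +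
          (Real.sqrt (2*Real.pi))⁻¹ ^ 3 * Real.exp (-((2:ℝ)/2)) *
            ((Real.sqrt 2 ^ 3 - Real.sqrt ((3:ℝ)/2) ^ 3) *
              (Real.sqrt Real.pi ^ 3 / Real.Gamma (((3:ℕ):ℝ)/2 + 1))))) :=
          ENNReal.ofReal_le_ofReal chiAux_numeric3
      _ = ENNReal.ofReal ((Real.sqrt (2*Real.pi))⁻¹ ^ 3 * Real.exp (-((1:ℝ)/2)) *
            ((Real.sqrt 1 ^ 3 - Real.sqrt 0 ^ 3) *
              (Real.sqrt Real.pi ^ 3 / Real.Gamma (((3:ℕ):ℝ)/2 + 1)))) +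
          (ENNReal.ofReal ((Real.sqrt (2*Real.pi))⁻¹ ^ 3 * Real.exp (-((3:ℝ)/2/2)) *
            ((Real.sqrt ((3:ℝ)/2) ^ 3 - Real.sqrt 1 ^ 3) *
              (Real.sqrt Real.pi ^ 3 / Real.Gamma (((3:ℕ):ℝ)/2 + 1)))) +
          ENNReal.ofReal ((Real.sqrt (2*Real.pi))⁻¹ ^ 3 * Real.exp (-((2:ℝ)/2)) *
            ((Real.sqrt 2 ^ 3 - Real.sqrt ((3:ℝ)/2) ^ 3) *
              (Real.sqrt Real.pi ^ 3 / Real.Gamma (((3:ℕ):ℝ)/2 + 1))))) := by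
          rw [ENNReal.ofReal_add hx1nn (add_nonneg hx2nn hx3nn),
            ENNReal.ofReal_add hx2nn hx3nn]
      _ ≤ μ {g | ∑ i, (g i) ^ 2 < (1:ℝ)} +
          (μ ({g | ∑ i, (g i) ^ 2 < (3/2:ℝ)} \ {g | ∑ i, (g i) ^ 2 < (1:ℝ)}) +
           μ ({g | ∑ i, (g i) ^ 2 < (2:ℝ)} \ {g | ∑ i, (g i) ^ 2 < (3/2:ℝ)})) :=
          add_le_add hlb1 (add_le_add hlb2 hlb3)
      _ = μ {g | ∑ i, (g i) ^ 2 < (2:ℝ)} := by rw [e2, e1, add_assoc]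
      _ ≤ μ {g | ∑ i, (g i) ^ 2 < ((3:ℕ):ℝ)/(1+ε)} := measure_mono hgoalsub
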